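/- arXiv:1406.1320 — 2 statements merged into one kernel-verified Lean document; each statement's English description precedes it below -/
import Mathlib

section
/- For every complex number z with Re z > 0 and every integer N ≥ 1, the series Σ_{k=1}^∞ (1/(2πk)) · ∫_0^∞ u^{2N−2}·e^{−2πku}/(u² + z²) du converges absolutely and ∫_0^∞ (1/(e^{2πt} − 1)) · (∫_0^t u^{2N−2}/(u² + z²) du) dt = Σ_{k=1}^∞ (1/(2πk)) · ∫_0^∞ u^{2N−2}·e^{−2πku}/(u² + z²) du. -/
open MeasureTheory Set Real Filter

namespace RemainderAux

lemma re_le_norm' (w : ℂ) : w.re ≤ ‖w‖ := by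
  have := Complex.abs_re_le_norm w
  exact (le_abs_self w.re).trans this

lemma denom_norm_ge (z : ℂ) (hz : 0 < z.re) (u : ℝ) : z.re ^ 2 ≤ ‖(u : ℂ) ^ 2 + z ^ 2‖ := by
  have h1 : (u : ℂ) ^ 2 + z ^ 2 = (z + u * Complex.I) * (z - u * Complex.I) := by
    ring_nf
    rw [Complex.I_sq]
    ring
  rw [h1, norm_mul]
  have h2 : z.re ≤ ‖z + u * Complex.I‖ := by simpa using re_le_norm' (z + u * Complex.I)
  have h3 : z.re ≤ ‖z - u * Complex.I‖ := by simpa using re_le_norm' (z - u * Complex.I)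
  nlinarith [norm_nonneg (z + u * Complex.I), norm_nonneg (z - u * Complex.I),
    sq_abs z.re, abs_nonneg z.re, le_abs_self z.re]

lemma denom_ne (z : ℂ) (hz : 0 < z.re) (u : ℝ) : (u : ℂ) ^ 2 + z ^ 2 ≠ 0 := by
  intro h
  have := denom_norm_ge z hz u
  rw [h, norm_zero] at this
  nlinarith

lemma pow_exp_bound (m : ℕ) {c t : ℝ} (hc : 0 < c) (ht : 0 ≤ t) :
    t ^ m * Real.exp (-(c * t)) ≤ m.factorial * (2 / c) ^ m * Real.exp (-(c / 2 * t)) := by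
  have h1 : (c / 2 * t) ^ m / m.factorial ≤ Real.exp (c / 2 * t) :=
    Real.pow_div_factorial_le_exp (x := c / 2 * t) (by positivity) m
  have hm : (0:ℝ) < m.factorial := by positivity
  have h2 : t ^ m ≤ m.factorial * (2 / c) ^ m * Real.exp (c / 2 * t) := by
    have h3 : (c / 2 * t) ^ m ≤ m.factorial * Real.exp (c / 2 * t) := by
      rw [div_le_iff₀ hm] at h1; linarith [h1]
    have h4 : t ^ m = (c / 2 * t) ^ m * (2 / c) ^ m := by
      rw [← mul_pow]; congr 1; field_simp
    rw [h4]
    calc (c/2*t)^m * (2/c)^m ≤ (m.factorial * Real.exp (c/2*t)) * (2/c)^m :=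
          mul_le_mul_of_nonneg_right h3 (by positivity)
      _ = m.factorial * (2/c)^m * Real.exp (c/2*t) := by ring
  calc t ^ m * Real.exp (-(c * t))
      ≤ (m.factorial * (2 / c) ^ m * Real.exp (c / 2 * t)) * Real.exp (-(c * t)) :=
        mul_le_mul_of_nonneg_right h2 (Real.exp_pos _).le
    _ = m.factorial * (2 / c) ^ m * Real.exp (-(c / 2 * t)) := by
        rw [mul_assoc, ← Real.exp_add]; ring_nf

lemma tendsto_exp_neg_mul (c : ℝ) (hc : 0 < c) :
    Tendsto (fun t : ℝ => Real.exp (-(c * t))) atTop (nhds 0) :=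
  Real.tendsto_exp_neg_atTop_nhds_zero.comp (Filter.Tendsto.const_mul_atTop hc tendsto_id)

lemma tendsto_pow_mul_exp_neg_mul (n : ℕ) {b : ℝ} (hb : 0 < b) :
    Tendsto (fun t : ℝ => t ^ n * Real.exp (-(b * t))) atTop (nhds 0) := by
  have h1 : Tendsto (fun t : ℝ => (b * t) ^ n * Real.exp (-(b * t))) atTop (nhds 0) :=
    (tendsto_pow_mul_exp_neg_atTop_nhds_zero n).comp (Filter.Tendsto.const_mul_atTop hb tendsto_id)
  have h2 := h1.const_mul ((1:ℝ)/b^n)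
  rw [mul_zero] at h2
  refine h2.congr (fun t => ?_)
  have hbn : b ^ n ≠ 0 := by positivity
  field_simp
  ring

lemma integral_exp_neg_mul_Ioi_zero {c : ℝ} (hc : 0 < c) :
    ∫ t in Ioi (0:ℝ), Real.exp (-(c * t)) = 1 / c := by
  have key := integral_Ioi_of_hasDerivAt_of_tendsto (f := fun t => -Real.exp (-(c * t)) / c)
    (f' := fun t => Real.exp (-(c * t))) (a := 0) (m := 0) ?_ ?_ ?_ ?_
  · rw [key]; simp [div_eq_mul_inv]
  · exact (((Real.continuous_exp.comp (continuous_const.mul continuous_id).neg).neg.div_const c)).continuousWithinAt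
  · intro x _
    have h1 : HasDerivAt (fun t : ℝ => -(c*t)) (-c) x := by
      have h := ((hasDerivAt_id' x).const_mul c).neg; simp only [mul_one] at h; exact h
    have h2 := (h1.exp).neg.div_const c
    refine h2.congr_deriv ?_
    rw [mul_neg, neg_neg, mul_div_assoc, div_self hc.ne', mul_one]
  · have h := exp_neg_integrableOn_Ioi 0 hc
    simpa only [neg_mul] using h
  · have h := (tendsto_exp_neg_mul c hc).neg.div_const c
    simpa using h

lemma integrable_pow_exp_neg_mul (m : ℕ) {c : ℝ} (hc : 0 < c) :
    IntegrableOn (fun t : ℝ => t ^ m * Real.exp (-(c * t))) (Ioi 0) := by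
  have hmeas : AEStronglyMeasurable (fun t : ℝ => t ^ m * Real.exp (-(c * t)))
      (volume.restrict (Ioi (0:ℝ))) :=
    ((continuous_pow m).mul (Real.continuous_exp.comp (continuous_const.mul continuous_id).neg)).aestronglyMeasurable
  have hint := (exp_neg_integrableOn_Ioi 0 (by linarith : (0:ℝ) < c/2)).const_mul
    ((m.factorial : ℝ) * (2 / c) ^ m)
  refine Integrable.mono hint hmeas ?_
  filter_upwards [ae_restrict_mem measurableSet_Ioi] with t ht
  rw [Real.norm_eq_abs, Real.norm_eq_abs]
  have ht0 : (0:ℝ) ≤ t := le_of_lt ht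
  rw [abs_of_nonneg (by positivity), abs_of_nonneg (by positivity)]
  calc t ^ m * Real.exp (-(c * t)) ≤ m.factorial * (2/c)^m * Real.exp (-(c/2*t)) :=
        pow_exp_bound m hc ht0
    _ = m.factorial * (2/c)^m * Real.exp (-(c/2)*t) := by rw [neg_mul]

lemma geom_expand (t : ℝ) (ht : 0 < t) :
    (1 / (Real.exp (2 * Real.pi * t) - 1) : ℝ)
      = ∑' k : ℕ, Real.exp (-(2 * Real.pi * ((k:ℝ) + 1) * t)) := by
  set r : ℝ := Real.exp (-(2 * Real.pi * t)) with hr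
  have hrpos : 0 < r := Real.exp_pos _
  have hr1 : r < 1 := by
    rw [hr, Real.exp_lt_one_iff]
    have := Real.pi_pos
    nlinarith
  have hterm : ∀ k : ℕ, Real.exp (-(2 * Real.pi * ((k:ℝ) + 1) * t)) = r ^ (k + 1) := by
    intro k
    rw [hr, ← Real.exp_nat_mul]
    congr 1
    push_cast
    ring
  rw [tsum_congr hterm]
  have hsum : ∑' k : ℕ, r ^ (k + 1) = r * (1 - r)⁻¹ := by
    simp_rw [pow_succ']
    rw [tsum_mul_left, tsum_geometric_of_lt_one hrpos.le hr1]
  rw [hsum]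
  have he : Real.exp (2 * Real.pi * t) = r⁻¹ := by
    rw [hr, ← Real.exp_neg]; ring_nf
  rw [he]
  have h1r : 1 - r ≠ 0 := by linarith
  have : r⁻¹ - 1 ≠ 0 := by
    have : 1 < r⁻¹ := (one_lt_inv₀ hrpos).mpr hr1
    linarith
  field_simp

section
variable (z : ℂ) (hz : 0 < z.re) (m : ℕ)

noncomputable def ff (u : ℝ) : ℂ := (u : ℂ) ^ m / ((u : ℂ) ^ 2 + z ^ 2)

noncomputable def FF (t : ℝ) : ℂ := ∫ u in (0:ℝ)..t, ff z m u

include hz in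
lemma ff_cont : Continuous (ff z m) := by
  apply Continuous.div
  · exact (Complex.continuous_ofReal.pow m)
  · exact (Complex.continuous_ofReal.pow 2).add continuous_const
  · exact fun u => denom_ne z hz u

include hz in
lemma ff_norm (u : ℝ) (hu : 0 ≤ u) : ‖ff z m u‖ ≤ u ^ m / z.re ^ 2 := by
  rw [ff, norm_div]
  have h1 : ‖(u:ℂ)^m‖ = u ^ m := by
    rw [norm_pow, Complex.norm_real, Real.norm_eq_abs, abs_of_nonneg hu]
  rw [h1]
  exact div_le_div_of_nonneg_left (by positivity) (by positivity) (denom_norm_ge z hz u)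

include hz in
lemma FF_deriv (t : ℝ) : HasDerivAt (FF z m) (ff z m t) t :=
  intervalIntegral.integral_hasDerivAt_right ((ff_cont z hz m).intervalIntegrable _ _)
    ((ff_cont z hz m).stronglyMeasurableAtFilter _ _) (ff_cont z hz m).continuousAt

include hz in
lemma FF_cont : Continuous (FF z m) :=
  continuous_iff_continuousAt.mpr (fun t => (FF_deriv z hz m t).continuousAt)

include hz in
lemma FF_norm (t : ℝ) (ht : 0 ≤ t) : ‖FF z m t‖ ≤ t ^ (m + 1) / z.re ^ 2 := by
  have h1 : ‖FF z m t‖ ≤ ∫ u in (0:ℝ)..t, ‖ff z m u‖ :=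
    intervalIntegral.norm_integral_le_integral_norm ht
  have h2 : (∫ u in (0:ℝ)..t, ‖ff z m u‖) ≤ ∫ u in (0:ℝ)..t, u ^ m / z.re ^ 2 := by
    apply intervalIntegral.integral_mono_on ht
    · exact ((ff_cont z hz m).norm.intervalIntegrable _ _)
    · exact (((continuous_pow m).div_const _).intervalIntegrable _ _)
    · intro u hu
      exact ff_norm z hz m u hu.1
  have h3 : (∫ u in (0:ℝ)..t, u ^ m / z.re ^ 2) = (t ^ (m+1) / (m+1)) / z.re ^ 2 := by
    rw [intervalIntegral.integral_div, integral_pow]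
    norm_num
  have h4 : (t ^ (m+1) / (m+1)) / z.re ^ 2 ≤ t ^ (m+1) / z.re ^ 2 := by
    apply (div_le_div_iff_of_pos_right (by positivity : (0:ℝ) < z.re ^ 2)).mpr
    apply div_le_self (by positivity)
    have : (1:ℝ) ≤ (m:ℝ) + 1 := by linarith [Nat.cast_nonneg (α := ℝ) m]
    exact_mod_cast this
  linarith

include hz in
lemma termF_integrable {b : ℝ} (hb : 0 < b) :
    IntegrableOn (fun t : ℝ => ((Real.exp (-(b * t)) : ℝ) : ℂ) * FF z m t) (Ioi 0) := by
  have hmeas : AEStronglyMeasurable (fun t : ℝ => ((Real.exp (-(b * t)) : ℝ) : ℂ) * FF z m t)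
      (volume.restrict (Ioi (0:ℝ))) :=
    ((Complex.continuous_ofReal.comp
      (Real.continuous_exp.comp (continuous_const.mul continuous_id).neg)).mul
      (FF_cont z hz m)).aestronglyMeasurable
  have hdom : IntegrableOn (fun t : ℝ => (1 / z.re ^ 2) * (t ^ (m+1) * Real.exp (-(b * t)))) (Ioi 0) :=
    (integrable_pow_exp_neg_mul (m+1) hb).const_mul _
  refine Integrable.mono hdom hmeas ?_
  filter_upwards [ae_restrict_mem measurableSet_Ioi] with t ht
  have ht0 : (0:ℝ) ≤ t := le_of_lt ht
  rw [norm_mul, Complex.norm_real, Real.norm_eq_abs, abs_of_nonneg (Real.exp_pos _).le,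
    Real.norm_eq_abs, abs_of_nonneg (by positivity)]
  calc Real.exp (-(b*t)) * ‖FF z m t‖ ≤ Real.exp (-(b*t)) * (t ^ (m+1) / z.re ^ 2) :=
        mul_le_mul_of_nonneg_left (FF_norm z hz m t ht0) (Real.exp_pos _).le
    _ = 1 / z.re ^ 2 * (t ^ (m+1) * Real.exp (-(b*t))) := by ring

include hz in
lemma termf_integrable {b : ℝ} (hb : 0 < b) :
    IntegrableOn (fun u : ℝ => ((Real.exp (-(b * u)) : ℝ) : ℂ) * ff z m u) (Ioi 0) := by
  have hmeas : AEStronglyMeasurable (fun u : ℝ => ((Real.exp (-(b * u)) : ℝ) : ℂ) * ff z m u)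
      (volume.restrict (Ioi (0:ℝ))) :=
    ((Complex.continuous_ofReal.comp
      (Real.continuous_exp.comp (continuous_const.mul continuous_id).neg)).mul
      (ff_cont z hz m)).aestronglyMeasurable
  have hdom : IntegrableOn (fun u : ℝ => (1 / z.re ^ 2) * (u ^ m * Real.exp (-(b * u)))) (Ioi 0) :=
    (integrable_pow_exp_neg_mul m hb).const_mul _
  refine Integrable.mono hdom hmeas ?_
  filter_upwards [ae_restrict_mem measurableSet_Ioi] with u hu
  have hu0 : (0:ℝ) ≤ u := le_of_lt hu
  rw [norm_mul, Complex.norm_real, Real.norm_eq_abs, abs_of_nonneg (Real.exp_pos _).le,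
    Real.norm_eq_abs, abs_of_nonneg (by positivity)]
  calc Real.exp (-(b*u)) * ‖ff z m u‖ ≤ Real.exp (-(b*u)) * (u ^ m / z.re ^ 2) :=
        mul_le_mul_of_nonneg_left (ff_norm z hz m u hu0) (Real.exp_pos _).le
    _ = 1 / z.re ^ 2 * (u ^ m * Real.exp (-(b*u))) := by ring

include hz in
lemma term_eq {b : ℝ} (hb : 0 < b) :
    ∫ t in Ioi (0:ℝ), ((Real.exp (-(b * t)) : ℝ) : ℂ) * FF z m t
      = (1 / (b:ℂ)) * ∫ u in Ioi (0:ℝ), ((Real.exp (-(b * u)) : ℝ) : ℂ) * ff z m u := by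
  set G : ℝ → ℂ := fun t => ((Real.exp (-(b * t)) : ℝ) : ℂ) * FF z m t with hG
  set G' : ℝ → ℂ := fun t =>
    ((-b : ℂ)) * (((Real.exp (-(b * t)) : ℝ) : ℂ) * FF z m t)
      + ((Real.exp (-(b * t)) : ℝ) : ℂ) * ff z m t with hG'
  have hderiv : ∀ t : ℝ, HasDerivAt G (G' t) t := by
    intro t
    have h1 : HasDerivAt (fun s : ℝ => Real.exp (-(b * s))) (-b * Real.exp (-(b * t))) t := by
      have : HasDerivAt (fun s : ℝ => -(b * s)) (-b) t := by
        have h := ((hasDerivAt_id' t).const_mul b).neg; simp only [mul_one] at h; exact h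
      simpa [mul_comm] using this.exp
    have h2 : HasDerivAt (fun s : ℝ => ((Real.exp (-(b * s)) : ℝ) : ℂ))
        (((-b * Real.exp (-(b * t)) : ℝ) : ℂ)) t := h1.ofReal_comp
    have h3 := h2.mul (FF_deriv z hz m t)
    refine h3.congr_deriv ?_
    rw [hG']
    push_cast
    ring
  have hint1 : IntegrableOn (fun t : ℝ => ((-b : ℂ)) * (((Real.exp (-(b * t)) : ℝ) : ℂ) * FF z m t)) (Ioi 0) :=
    (termF_integrable z hz m hb).const_mul _
  have hint2 := termf_integrable z hz m hb
  have hintG' : IntegrableOn G' (Ioi 0) := hint1.add hint2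
  have htend : Tendsto G atTop (nhds 0) := by
    apply squeeze_zero_norm' (a := fun t => 1 / z.re ^ 2 * (t ^ (m+1) * Real.exp (-(b * t))))
    · filter_upwards [eventually_ge_atTop (0:ℝ)] with t ht0
      rw [hG, norm_mul, Complex.norm_real, Real.norm_eq_abs, abs_of_nonneg (Real.exp_pos _).le]
      calc Real.exp (-(b*t)) * ‖FF z m t‖ ≤ Real.exp (-(b*t)) * (t ^ (m+1) / z.re ^ 2) :=
            mul_le_mul_of_nonneg_left (FF_norm z hz m t ht0) (Real.exp_pos _).le
        _ = 1 / z.re ^ 2 * (t ^ (m+1) * Real.exp (-(b*t))) := by ring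
    · have := (tendsto_pow_mul_exp_neg_mul (m+1) hb).const_mul (1 / z.re ^ 2)
      simpa using this
  have hcont : ContinuousWithinAt G (Ici 0) 0 := ((hderiv 0).continuousAt).continuousWithinAt
  have hFTC := integral_Ioi_of_hasDerivAt_of_tendsto hcont (fun x _ => hderiv x) hintG' htend
  have hG0 : G 0 = 0 := by
    rw [hG]
    simp [FF, intervalIntegral.integral_same]
  rw [hG0, sub_zero] at hFTC
  have hsplit := integral_add hint1 hint2
  rw [hG'] at hFTC
  rw [hFTC] at hsplit
  rw [integral_const_mul] at hsplit
  have hbne : (b : ℂ) ≠ 0 := by exact_mod_cast hb.ne'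
  have hIF : (∫ u in Ioi (0:ℝ), ((Real.exp (-(b * u)) : ℝ) : ℂ) * ff z m u)
      = (b:ℂ) * ∫ t in Ioi (0:ℝ), ((Real.exp (-(b * t)) : ℝ) : ℂ) * FF z m t := by
    linear_combination -hsplit
  rw [hIF, one_div, inv_mul_cancel_left₀ hbne]

include hz in
lemma term_norm_bound {b : ℝ} (hb : 0 < b) :
    (∫ t in Ioi (0:ℝ), ‖((Real.exp (-(b * t)) : ℝ) : ℂ) * FF z m t‖)
      ≤ ((m+1).factorial / z.re ^ 2) * (2 / b) ^ (m + 2) := by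
  have hdom : IntegrableOn
      (fun t : ℝ => (1 / z.re ^ 2) * ((m+1).factorial * (2/b)^(m+1) * Real.exp (-(b/2 * t))))
      (Ioi 0) := by
    have h := exp_neg_integrableOn_Ioi 0 (by linarith : (0:ℝ) < b/2)
    simp only [neg_mul] at h
    exact (h.const_mul _).const_mul _
  have h1 : (∫ t in Ioi (0:ℝ), ‖((Real.exp (-(b * t)) : ℝ) : ℂ) * FF z m t‖)
      ≤ ∫ t in Ioi (0:ℝ), (1 / z.re ^ 2) * ((m+1).factorial * (2/b)^(m+1) * Real.exp (-(b/2 * t))) := by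
    apply setIntegral_mono_on ((termF_integrable z hz m hb).norm) hdom measurableSet_Ioi
    intro t ht
    have ht0 : (0:ℝ) ≤ t := le_of_lt ht
    rw [norm_mul, Complex.norm_real, Real.norm_eq_abs, abs_of_nonneg (Real.exp_pos _).le]
    calc Real.exp (-(b*t)) * ‖FF z m t‖ ≤ Real.exp (-(b*t)) * (t ^ (m+1) / z.re ^ 2) :=
          mul_le_mul_of_nonneg_left (FF_norm z hz m t ht0) (Real.exp_pos _).le
      _ = 1 / z.re ^ 2 * (t ^ (m+1) * Real.exp (-(b*t))) := by ring
      _ ≤ 1 / z.re ^ 2 * ((m+1).factorial * (2/b)^(m+1) * Real.exp (-(b/2 * t))) := by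
          apply mul_le_mul_of_nonneg_left (pow_exp_bound (m+1) hb ht0) (by positivity)
  have h2 : (∫ t in Ioi (0:ℝ), (1 / z.re ^ 2) * ((m+1).factorial * (2/b)^(m+1) * Real.exp (-(b/2 * t))))
      = (1 / z.re ^ 2) * ((m+1).factorial * (2/b)^(m+1)) * (2 / b) := by
    rw [integral_const_mul, integral_const_mul, integral_exp_neg_mul_Ioi_zero (by linarith : (0:ℝ) < b/2)]
    have hh : (1:ℝ)/(b/2) = 2/b := by
      field_simp
    rw [hh]
    ring
  rw [h2] at h1
  calc (∫ t in Ioi (0:ℝ), ‖((Real.exp (-(b * t)) : ℝ) : ℂ) * FF z m t‖)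
      ≤ (1 / z.re ^ 2) * ((m+1).factorial * (2/b)^(m+1)) * (2 / b) := h1
    _ = ((m+1).factorial / z.re ^ 2) * (2 / b) ^ (m + 2) := by
        rw [pow_succ]
        ring

end

end RemainderAux

open RemainderAux

/-- Expanding `1/(e^(2πt) - 1)` as `∑_{k≥1} e^(-2πkt)` and interchanging summation and
integration: the double-integral remainder equals an absolutely convergent sum of
Laplace-type integrals. -/
theorem remainder_double_integral_eq_tsum (z : ℂ) (hz : 0 < z.re) (N : ℕ) (hN : 1 ≤ N) :
    Summable (fun k : ℕ =>
      ‖(1 / (2 * Real.pi * ((k : ℂ) + 1))) *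
        ∫ u in Set.Ioi (0 : ℝ),
          ((u : ℂ)) ^ (2 * N - 2) * ((Real.exp (-(2 * Real.pi * ((k : ℝ) + 1) * u)) : ℝ) : ℂ) /
            ((u : ℂ) ^ 2 + z ^ 2)‖) ∧
    (∫ t in Set.Ioi (0 : ℝ),
        ((1 / (Real.exp (2 * Real.pi * t) - 1) : ℝ) : ℂ) *
          ∫ u in (0 : ℝ)..t, ((u : ℂ)) ^ (2 * N - 2) / ((u : ℂ) ^ 2 + z ^ 2)) =
      ∑' k : ℕ,
        (1 / (2 * Real.pi * ((k : ℂ) + 1))) *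
          ∫ u in Set.Ioi (0 : ℝ),
            ((u : ℂ)) ^ (2 * N - 2) * ((Real.exp (-(2 * Real.pi * ((k : ℝ) + 1) * u)) : ℝ) : ℂ) /
              ((u : ℂ) ^ 2 + z ^ 2) := by
  have hπ := Real.pi_gt_three
  have hbk : ∀ k : ℕ, (0:ℝ) < 2 * Real.pi * ((k:ℝ) + 1) := by
    intro k
    have : (0:ℝ) ≤ (k:ℝ) := Nat.cast_nonneg k
    nlinarith
  have hck : ∀ k : ℕ,
      (1 / (2 * Real.pi * ((k : ℂ) + 1))) *
        (∫ u in Set.Ioi (0 : ℝ),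
          ((u : ℂ)) ^ (2 * N - 2) * ((Real.exp (-(2 * Real.pi * ((k : ℝ) + 1) * u)) : ℝ) : ℂ) /
            ((u : ℂ) ^ 2 + z ^ 2))
      = ∫ t in Set.Ioi (0:ℝ),
          ((Real.exp (-(2 * Real.pi * ((k:ℝ) + 1) * t)) : ℝ) : ℂ) * FF z (2*N-2) t := by
    intro k
    rw [term_eq z hz (2*N-2) (hbk k)]
    congr 1
    · push_cast
      ring
    · apply setIntegral_congr_fun measurableSet_Ioi
      intro u _
      simp only [ff]
      ring
  have hint : ∀ k : ℕ, Integrable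
      (fun t : ℝ => ((Real.exp (-(2 * Real.pi * ((k:ℝ) + 1) * t)) : ℝ) : ℂ) * FF z (2*N-2) t)
      (volume.restrict (Ioi (0:ℝ))) :=
    fun k => termF_integrable z hz (2*N-2) (hbk k)
  have hbound : ∀ k : ℕ,
      (∫ t in Ioi (0:ℝ), ‖((Real.exp (-(2 * Real.pi * ((k:ℝ) + 1) * t)) : ℝ) : ℂ) * FF z (2*N-2) t‖)
        ≤ (((2*N-2)+1).factorial / z.re ^ 2) * (1/((k:ℝ)+1))^2 := by
    intro k
    refine le_trans (term_norm_bound z hz (2*N-2) (hbk k)) ?_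
    apply mul_le_mul_of_nonneg_left ?_ (by positivity)
    have hk0 : (0:ℝ) ≤ (k:ℝ) := Nat.cast_nonneg k
    have h1 : 2 / (2 * Real.pi * ((k:ℝ)+1)) ≤ 1/((k:ℝ)+1) := by
      rw [div_le_div_iff₀ (hbk k) (by positivity)]
      nlinarith
    have h2 : (0:ℝ) ≤ 2 / (2 * Real.pi * ((k:ℝ)+1)) := by positivity
    have h3 : 1/((k:ℝ)+1) ≤ 1 := by
      rw [div_le_one (by positivity)]
      linarith
    calc (2 / (2 * Real.pi * ((k:ℝ)+1))) ^ ((2*N-2) + 2)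
        ≤ (1/((k:ℝ)+1)) ^ ((2*N-2) + 2) := pow_le_pow_left₀ h2 h1 _
      _ ≤ (1/((k:ℝ)+1)) ^ 2 := pow_le_pow_of_le_one (by positivity) h3 (by omega)
  have hCsum : Summable (fun k : ℕ => ((((2*N-2)+1).factorial / z.re ^ 2 : ℝ)) * (1/((k:ℝ)+1))^2) := by
    apply Summable.mul_left
    have h0 : Summable (fun n : ℕ => 1/(n:ℝ)^2) := summable_one_div_nat_pow.mpr (by norm_num)
    have h := (summable_nat_add_iff 1).mpr h0
    refine h.congr fun k => ?_
    push_cast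
    rw [div_pow, one_pow]
  have hnormsum : Summable (fun k : ℕ =>
      ∫ t in Ioi (0:ℝ), ‖((Real.exp (-(2 * Real.pi * ((k:ℝ) + 1) * t)) : ℝ) : ℂ) * FF z (2*N-2) t‖) :=
    Summable.of_nonneg_of_le (fun k => integral_nonneg (fun t => norm_nonneg _)) hbound hCsum
  constructor
  · apply Summable.of_nonneg_of_le (fun k => norm_nonneg _) ?_ hnormsum
    intro k
    rw [hck k]
    exact norm_integral_le_integral_norm _
  · rw [tsum_congr hck]
    rw [integral_tsum_of_summable_integral_norm hint hnormsum]
    apply setIntegral_congr_fun measurableSet_Ioi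
    intro t ht
    show ((1 / (Real.exp (2 * Real.pi * t) - 1) : ℝ) : ℂ) *
        (∫ u in (0:ℝ)..t, ((u:ℂ))^(2*N-2)/((u:ℂ)^2+z^2))
      = ∑' k : ℕ, ((Real.exp (-(2 * Real.pi * ((k:ℝ) + 1) * t)) : ℝ) : ℂ) * FF z (2*N-2) t
    have hFFdef : (∫ u in (0:ℝ)..t, ((u:ℂ))^(2*N-2)/((u:ℂ)^2+z^2)) = FF z (2*N-2) t := rfl
    rw [hFFdef, geom_expand t ht, Complex.ofReal_tsum, ← tsum_mul_right]
end

section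
/- Let L : ℂ → ℂ be holomorphic on ℂ minus the closed negative real axis (−∞, 0], satisfy exp(L(z)) = Γ(z) on that domain, and satisfy L(x) = log(Γ(x)) for all real x > 0. Then for every complex z with Im z > 0 (so that 0 < arg z < π), [L(z) − (z − 1/2)·Log z + z − (1/2)·log(2π)] + [L(−z) + (z + 1/2)·(Log z − iπ) − z − (1/2)·log(2π)] = −Log(1 − e^{2πiz}), where Log denotes the principal branch of the complex logarithm. -/
open Complex

/-- A continuous function on a preconnected set whose exponential is constantly `1`
and which vanishes at one point vanishes identically. -/
lemma omega_aux_discrete {S : Set ℂ} (hS : IsPreconnected S) {f : ℂ → ℂ}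
    (hf : ContinuousOn f S) (h1 : ∀ w ∈ S, Complex.exp (f w) = 1)
    {w₀ : ℂ} (hw₀ : w₀ ∈ S) (h0 : f w₀ = 0) : ∀ w ∈ S, f w = 0 := by
  have hπ : (2 * Real.pi) ≠ 0 := by positivity
  set g : ℂ → ℝ := fun u => (f u).im / (2 * Real.pi) with hgdef
  have hg : ContinuousOn g S := (Complex.continuous_im.comp_continuousOn hf).div_const _
  have hint : ∀ u ∈ S, ∃ n : ℤ, g u = n := by
    intro u hu
    obtain ⟨n, hn⟩ := Complex.exp_eq_one_iff.mp (h1 u hu)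
    refine ⟨n, ?_⟩
    have him : (f u).im = n * (2 * Real.pi) := by
      rw [hn]; simp [Complex.mul_im]
    simp only [hgdef, him]
    field_simp
  have hT : IsPreconnected (g '' S) := hS.image g hg
  have hsub : ∀ a ∈ g '' S, ∀ b ∈ g '' S, a = b := by
    intro a ha b hb
    by_contra hne
    obtain ⟨u, hu, hau⟩ := ha
    obtain ⟨v, hv, hbv⟩ := hb
    obtain ⟨m, hm⟩ := hint u hu
    obtain ⟨k, hk⟩ := hint v hv
    have ham : a = (m:ℝ) := by rw [← hau, hm]
    have hbk : b = (k:ℝ) := by rw [← hbv, hk]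
    subst ham; subst hbk
    have hmk : m ≠ k := by
      intro h; exact hne (by rw [h])
    have hminmax : ((min m k : ℤ) : ℝ) = (m:ℝ) ⊓ (k:ℝ) := by
      exact_mod_cast Int.cast_min
    have hdist : (m:ℝ) ⊓ (k:ℝ) + 1 ≤ (m:ℝ) ⊔ (k:ℝ) := by
      rcases le_total m k with h | h
      · have h' : m < k := lt_of_le_of_ne h hmk
        rw [inf_eq_left.mpr (by exact_mod_cast h), sup_eq_right.mpr (by exact_mod_cast h)]
        exact_mod_cast h'
      · have h' : k < m := lt_of_le_of_ne h (Ne.symm hmk)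
        rw [inf_eq_right.mpr (by exact_mod_cast h), sup_eq_left.mpr (by exact_mod_cast h)]
        exact_mod_cast h'
    have hle : (m:ℝ) ⊓ (k:ℝ) ≤ (m:ℝ) ⊓ (k:ℝ) := le_refl _
    have hcmem : (m:ℝ) ⊓ (k:ℝ) + 1/2 ∈ Set.uIcc ((m:ℝ)) ((k:ℝ)) := by
      rw [Set.uIcc, Set.mem_Icc]
      exact ⟨by linarith, by linarith⟩
    have hcT : (m:ℝ) ⊓ (k:ℝ) + 1/2 ∈ g '' S :=
      (isPreconnected_iff_ordConnected.mp hT).uIcc_subset ⟨u, hu, hau⟩ ⟨v, hv, hbv⟩ hcmem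
    obtain ⟨w', hw', hcw'⟩ := hcT
    obtain ⟨n, hn⟩ := hint w' hw'
    rw [hcw'] at hn
    rw [← hminmax] at hn
    have h2r : (2 * n : ℝ) = 2 * ((min m k : ℤ) : ℝ) + 1 := by linarith [hn.symm]
    have h2 : (2 * n : ℤ) = 2 * (min m k) + 1 := by exact_mod_cast h2r
    omega
  intro w hw
  obtain ⟨n, hn⟩ := Complex.exp_eq_one_iff.mp (h1 w hw)
  have hgw : g w = g w₀ := hsub _ ⟨w, hw, rfl⟩ _ ⟨w₀, hw₀, rfl⟩
  have hgw0 : g w₀ = 0 := by simp [hgdef, h0]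
  have : ((n : ℝ)) = 0 := by
    have him : (f w).im = n * (2 * Real.pi) := by
      rw [hn]; simp [Complex.mul_im]
    have : g w = n := by simp only [hgdef, him]; field_simp
    rw [hgw, hgw0] at this
    linarith [this.symm]
  have hn0 : n = 0 := by exact_mod_cast this
  rw [hn, hn0]; simp

/-- The continuation formula `Ω(z) + Ω(z e^(-iπ)) = -log(1 - e^(2πiz))` for the slowly
varying part of `log Γ`, a consequence of the reflection formula for the Gamma function. -/
theorem omega_continuation_formula (L : ℂ → ℂ)
    (hL : DifferentiableOn ℂ L Complex.slitPlane)
    (hexp : ∀ z ∈ Complex.slitPlane, Complex.exp (L z) = Complex.Gamma z)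
    (hreal : ∀ x : ℝ, 0 < x → L (x : ℂ) = (Real.log (Real.Gamma x) : ℂ))
    (z : ℂ) (hz : 0 < z.im) :
    (L z - (z - 1/2) * Complex.log z + z - (1/2) * (Real.log (2 * Real.pi) : ℂ)) +
      (L (-z) + (z + 1/2) * (Complex.log z - Real.pi * Complex.I) - z -
        (1/2) * (Real.log (2 * Real.pi) : ℂ)) =
      -Complex.log (1 - Complex.exp (2 * Real.pi * Complex.I * z)) := by
  have hπ : (0:ℝ) < Real.pi := Real.pi_pos
  have hπc : ((Real.pi : ℝ) : ℂ) ≠ 0 := Complex.ofReal_ne_zero.mpr (ne_of_gt hπ)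
  have hΓne : ∀ w ∈ Complex.slitPlane, Complex.Gamma w ≠ 0 := fun w hw =>
    (hexp w hw) ▸ Complex.exp_ne_zero _
  -- membership lemmas
  have hmemU : ∀ w : ℂ, 0 < w.im → w ∈ Complex.slitPlane := fun w hw =>
    Complex.mem_slitPlane_iff.mpr (Or.inr hw.ne')
  have hmemU' : ∀ w : ℂ, 0 < w.im → -w ∈ Complex.slitPlane := fun w hw =>
    Complex.mem_slitPlane_iff.mpr (Or.inr (by simpa using hw.ne'))
  have habsq : ∀ w : ℂ, 0 < w.im → ‖Complex.exp (2 * Real.pi * Complex.I * w)‖ < 1 := by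
    intro w hw
    rw [Complex.norm_exp]
    have hre : ((2:ℂ) * (Real.pi:ℝ) * Complex.I * w).re = -(2 * Real.pi * w.im) := by
      simp [Complex.mul_re, Complex.mul_im]
    rw [hre]
    exact Real.exp_lt_one_iff.mpr (by nlinarith)
  have hqslit : ∀ w : ℂ, 0 < w.im →
      1 - Complex.exp (2 * Real.pi * Complex.I * w) ∈ Complex.slitPlane := by
    intro w hw
    refine Complex.mem_slitPlane_iff.mpr (Or.inl ?_)
    have h1 := habsq w hw
    have h2 := Complex.re_le_norm (Complex.exp (2 * Real.pi * Complex.I * w))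
    simp only [Complex.sub_re, Complex.one_re]
    linarith
  -- Part A : conjugation symmetry of L
  have hSpre : IsPreconnected Complex.slitPlane := by
    haveI := Complex.starConvex_one_slitPlane.contractibleSpace ⟨1, Complex.one_mem_slitPlane⟩
    exact isPreconnected_iff_preconnectedSpace.mpr inferInstance
  have hconjmem : ∀ w : ℂ, w ∈ Complex.slitPlane → (starRingEnd ℂ) w ∈ Complex.slitPlane := by
    intro w hw
    rcases Complex.mem_slitPlane_iff.mp hw with h | h
    · exact Complex.mem_slitPlane_iff.mpr (Or.inl (by simpa using h))
    · exact Complex.mem_slitPlane_iff.mpr (Or.inr (by simpa using h))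
  have hA : ∀ w ∈ Complex.slitPlane, L w - (starRingEnd ℂ) (L ((starRingEnd ℂ) w)) = 0 := by
    refine omega_aux_discrete hSpre ?_ ?_ Complex.one_mem_slitPlane ?_
    · refine ContinuousOn.sub hL.continuousOn ?_
      exact Complex.continuous_conj.comp_continuousOn
        (hL.continuousOn.comp Complex.continuous_conj.continuousOn hconjmem)
    · intro w hw
      rw [Complex.exp_sub, hexp w hw, Complex.exp_conj, hexp _ (hconjmem w hw),
        Complex.Gamma_conj, Complex.conj_conj]
      exact div_self (hΓne w hw)
    · have h1 : L 1 = ((Real.log (Real.Gamma 1) : ℝ) : ℂ) := by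
        simpa using hreal 1 one_pos
      rw [map_one, h1, Complex.conj_ofReal, sub_self]
  have hLconjI : L (-Complex.I) = (starRingEnd ℂ) (L Complex.I) := by
    have h := hA Complex.I (Complex.mem_slitPlane_iff.mpr (Or.inr (by simp)))
    rw [Complex.conj_I] at h
    have h' : (starRingEnd ℂ) (L (-Complex.I)) = L Complex.I := by
      rw [sub_eq_zero] at h; exact h.symm
    calc L (-Complex.I) = (starRingEnd ℂ) ((starRingEnd ℂ) (L (-Complex.I))) :=
          (Complex.conj_conj _).symm
      _ = (starRingEnd ℂ) (L Complex.I) := by rw [h']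
  -- Part B : the function F
  set F : ℂ → ℂ := fun w => L w + L (-w) + Complex.log w -
      (w + 1/2) * (Real.pi : ℂ) * Complex.I - (Real.log (2 * Real.pi) : ℂ) +
      Complex.log (1 - Complex.exp (2 * Real.pi * Complex.I * w)) with hFdef
  have hUpre : IsPreconnected {w : ℂ | 0 < w.im} := (convex_halfSpace_im_gt 0).isPreconnected
  have hFcont : ContinuousOn F {w : ℂ | 0 < w.im} := by
    rw [hFdef]
    refine ContinuousOn.add (ContinuousOn.sub (ContinuousOn.sub (ContinuousOn.add
      (ContinuousOn.add ?_ ?_) ?_) ?_) continuousOn_const) ?_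
    · exact hL.continuousOn.mono (fun w hw => hmemU w hw)
    · exact hL.continuousOn.comp continuous_neg.continuousOn (fun w hw => hmemU' w hw)
    · exact ContinuousOn.clog continuousOn_id (fun w hw => hmemU w hw)
    · exact (Continuous.continuousOn (by fun_prop))
    · exact ContinuousOn.clog (Continuous.continuousOn (by fun_prop)) (fun w hw => hqslit w hw)
  have hFexp : ∀ w ∈ {w : ℂ | 0 < w.im}, Complex.exp (F w) = 1 := by
    intro w hw
    simp only [Set.mem_setOf_eq] at hw
    have hw0 : w ≠ 0 := fun h => by rw [h] at hw; simp at hw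
    have hws := hmemU w hw
    have hws' := hmemU' w hw
    have hq0 : 1 - Complex.exp (2 * Real.pi * Complex.I * w) ≠ 0 :=
      Complex.slitPlane_ne_zero (hqslit w hw)
    have hnw : -w ≠ 0 := neg_ne_zero.mpr hw0
    have hsin : Complex.sin (Real.pi * w) ≠ 0 := by
      intro h
      obtain ⟨k, hk⟩ := Complex.sin_eq_zero_iff.mp h
      have hwk : w = (k:ℂ) := by
        apply mul_left_cancel₀ hπc
        rw [hk]; ring
      rw [hwk] at hw; simp at hw
    have hrefl := Complex.Gamma_mul_Gamma_one_sub w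
    rw [show (1:ℂ) - w = -w + 1 by ring, Complex.Gamma_add_one (-w) hnw,
      eq_div_iff hsin] at hrefl
    rw [hFdef]
    simp only []
    rw [Complex.exp_add, Complex.exp_sub, Complex.exp_sub, Complex.exp_add, Complex.exp_add]
    rw [hexp w hws, hexp (-w) hws', Complex.exp_log hw0, Complex.exp_log hq0]
    rw [show Complex.exp ((Real.log (2*Real.pi) : ℝ):ℂ) = ((2*Real.pi : ℝ):ℂ) from by
      rw [← Complex.ofReal_exp, Real.exp_log (by positivity)]]
    rw [show (w + 1/2) * ((Real.pi:ℝ):ℂ) * Complex.I =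
      w * Real.pi * Complex.I + ((Real.pi:ℝ):ℂ)/2 * Complex.I from by ring]
    have hhalf : Complex.exp (((Real.pi:ℝ):ℂ)/2 * Complex.I) = Complex.I := by
      rw [Complex.exp_mul_I, Complex.cos_pi_div_two, Complex.sin_pi_div_two]; ring
    rw [Complex.exp_add, hhalf]
    rw [show (2:ℂ) * Real.pi * Complex.I * w =
      w * Real.pi * Complex.I + w * Real.pi * Complex.I from by ring, Complex.exp_add]
    have hsin_def : Complex.sin ((Real.pi:ℝ) * w) =
        (Complex.exp (-((Real.pi:ℝ):ℂ) * w * Complex.I) -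
          Complex.exp (((Real.pi:ℝ):ℂ) * w * Complex.I)) * Complex.I / 2 := by
      rw [Complex.sin]; ring_nf
    rw [hsin_def, show -((Real.pi:ℝ):ℂ) * w * Complex.I =
      -(w * Real.pi * Complex.I) from by ring, Complex.exp_neg,
      show ((Real.pi:ℝ):ℂ) * w * Complex.I = w * Real.pi * Complex.I from by ring] at hrefl
    set E := Complex.exp (w * Real.pi * Complex.I) with hE
    have hE0 : E ≠ 0 := Complex.exp_ne_zero _
    field_simp at hrefl ⊢
    push_cast
    linear_combination Complex.I * hrefl + (Complex.Gamma w * Complex.Gamma (-w) * w * (1 - E^2)) * Complex.I_sq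
  have hFI : F Complex.I = 0 := by
    have hIin : Complex.I ∈ {w : ℂ | 0 < w.im} := by simp
    obtain ⟨n, hn⟩ := Complex.exp_eq_one_iff.mp (hFexp Complex.I hIin)
    have hepos : (0:ℝ) < 1 - Real.exp (-(2 * Real.pi)) := by
      have : Real.exp (-(2 * Real.pi)) < 1 := Real.exp_lt_one_iff.mpr (by nlinarith)
      linarith
    have him : (F Complex.I).im = 0 := by
      rw [hFdef]
      simp only []
      rw [hLconjI, Complex.add_conj, Complex.log_I]
      rw [show (2:ℂ) * Real.pi * Complex.I * Complex.I = ((-(2 * Real.pi) : ℝ) : ℂ) from by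
        push_cast
        linear_combination (2 * (Real.pi:ℂ)) * Complex.I_sq]
      rw [← Complex.ofReal_exp,
        show (1:ℂ) - ((Real.exp (-(2 * Real.pi)) : ℝ) : ℂ) =
          (((1 - Real.exp (-(2 * Real.pi)) : ℝ)) : ℂ) from by push_cast; ring,
        ← Complex.ofReal_log hepos.le]
      simp [Complex.add_im, Complex.sub_im, Complex.mul_im, Complex.mul_re]
      ring
    rw [hn] at him ⊢
    have hnim : ((n:ℂ) * (2 * Real.pi * Complex.I)).im = n * (2 * Real.pi) := by
      simp [Complex.mul_im]
    rw [hnim] at him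
    have hn0 : (n:ℝ) = 0 := by
      have h2π : (0:ℝ) < 2 * Real.pi := by positivity
      rcases mul_eq_zero.mp him with h | h
      · exact h
      · exact absurd h (ne_of_gt h2π)
    have : n = 0 := by exact_mod_cast hn0
    rw [this]; simp
  have hF0 : F z = 0 := omega_aux_discrete hUpre hFcont hFexp
    (by simp : Complex.I ∈ {w : ℂ | 0 < w.im}) hFI z hz
  rw [hFdef] at hF0
  simp only [] at hF0
  linear_combination hF0
end
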